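/- Let K ⊆ Y be a nonempty proper closed convex cone, Q ⊆ Y nonempty with Q − K closed and Q − K ≠ Y, and e ∈ K \ {0}. Then Q − K = ⋂_{α>0} (Q − K + αe). -/

import Mathlib

open Set Pointwise

/-- if Q − K is closed (and ≠ Y) then Q − K = ⋂_{α>0} (Q − K + αe). -/
theorem stmt_7 {Y : Type*} [AddCommGroup Y] [Module ℝ Y] [TopologicalSpace Y]
    [IsTopologicalAddGroup Y] [ContinuousSMul ℝ Y]
    (K : Set Y) (hKne : K.Nonempty) (hKcl : IsClosed K) (hKconv : Convex ℝ K)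
    (hKcone : ∀ (c : ℝ), 0 ≤ c → ∀ x ∈ K, c • x ∈ K) (hKproper : K ≠ univ)
    (Q : Set Y) (hQne : Q.Nonempty) (hQK : Q - K ≠ univ) (hQKcl : IsClosed (Q - K))
    (e : Y) (he : e ∈ K) (he0 : e ≠ 0) :
    Q - K = ⋂ α ∈ Ioi (0 : ℝ), (fun y => y + α • e) '' (Q - K) := by
  have hadd : ∀ a ∈ K, ∀ b ∈ K, a + b ∈ K := by
    intro a ha b hb
    have h := hKconv ha hb (by norm_num : (0:ℝ) ≤ 1/2) (by norm_num : (0:ℝ) ≤ 1/2)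
      (by norm_num)
    have h2 := hKcone 2 (by norm_num) _ h
    have : (2:ℝ) • ((1/2:ℝ) • a + (1/2:ℝ) • b) = a + b := by
      rw [smul_add, smul_smul, smul_smul]; norm_num
    rwa [this] at h2
  ext x
  simp only [mem_iInter, mem_image]
  constructor
  · rintro ⟨q, hq, k, hk, rfl⟩ α hα
    refine ⟨q - (k + α • e), ⟨q, hq, k + α • e, hadd k hk _ (hKcone α hα.le e he), rfl⟩, ?_⟩
    abel
  · intro h
    have key : ∀ α : ℝ, 0 < α → x - α • e ∈ Q - K := by
      intro α hα
      obtain ⟨z, hz, hzx⟩ := h α hα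
      have : z = x - α • e := by rw [← hzx]; abel
      rwa [← this]
    have htend : Filter.Tendsto (fun n : ℕ => x - (1 / (n + 1) : ℝ) • e)
        Filter.atTop (nhds x) := by
      have h0 : Filter.Tendsto (fun n : ℕ => (1 / (n + 1) : ℝ)) Filter.atTop (nhds 0) :=
        tendsto_one_div_add_atTop_nhds_zero_nat
      have := (h0.smul_const e)
      rw [zero_smul] at this
      simpa using tendsto_const_nhds.sub this
    exact hQKcl.mem_of_tendsto htend
      (Filter.Eventually.of_forall fun n => key _ (by positivity))
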